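/- A finite eulerian graph G (a finite connected simple graph with all vertex degrees even) admits a rooted 2-odd decomposition if and only if G is non-bipartite and has an even number of edges. -/

import Mathlib

open SimpleGraph

namespace OddAux

open SimpleGraph Walk

variable {V : Type*} {G : SimpleGraph V}

lemma list_length_le_ncard {α : Type*} {l : List α} (hl : l.Nodup) {s : Set α}
    (hs : s.Finite) (h : ∀ x ∈ l, x ∈ s) : l.length ≤ s.ncard := by
  classical
  rw [Set.ncard_eq_toFinset_card _ hs, ← List.toFinset_card_of_nodup hl]
  exact Finset.card_le_card (fun x hx => hs.mem_toFinset.2 (h x (List.mem_toFinset.1 hx)))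

lemma list_length_lt_ncard {α : Type*} {l : List α} (hl : l.Nodup) {s : Set α}
    (hs : s.Finite) (h : ∀ x ∈ l, x ∈ s) {e : α} (he : e ∈ s) (hel : e ∉ l) :
    l.length < s.ncard := by
  classical
  rw [Set.ncard_eq_toFinset_card _ hs, ← List.toFinset_card_of_nodup hl]
  refine Finset.card_lt_card ⟨fun x hx => hs.mem_toFinset.2 (h x (List.mem_toFinset.1 hx)), ?_⟩
  intro hsub
  exact hel (List.mem_toFinset.1 (hsub (hs.mem_toFinset.2 he)))

lemma list_length_eq_ncard {α : Type*} {l : List α} (hl : l.Nodup) {s : Set α}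
    (hs : s.Finite) (h : ∀ x ∈ l, x ∈ s) (h2 : ∀ x ∈ s, x ∈ l) : l.length = s.ncard := by
  classical
  rw [Set.ncard_eq_toFinset_card _ hs, ← List.toFinset_card_of_nodup hl]
  congr 1
  ext x
  simp only [List.mem_toFinset, Set.Finite.mem_toFinset]
  exact ⟨h x, h2 x⟩

lemma ncard_mem_list {α : Type*} {l : List α} (hl : l.Nodup) :
    {e | e ∈ l}.ncard = l.length :=
  (list_length_eq_ncard hl l.finite_toSet (fun _ h => h) (fun _ h => h)).symm

lemma ncard_nbhd [DecidableEq V] (l : List (Sym2 V)) (hl : l.Nodup) (w : V) :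
    {u | s(w, u) ∈ l}.ncard = l.countP (fun e => w ∈ e) := by
  classical
  have himg : (fun u => s(w, u)) '' {u | s(w, u) ∈ l} = {e | e ∈ l ∧ w ∈ e} := by
    ext e
    constructor
    · rintro ⟨u, hu, rfl⟩
      exact ⟨hu, Sym2.mem_mk_left w u⟩
    · rintro ⟨hel, hwe⟩
      obtain ⟨u, rfl⟩ := Sym2.mem_iff_exists.1 hwe
      exact ⟨u, hel, rfl⟩
  have hinj : Function.Injective (fun u : V => s(w, u)) := fun a b hab => Sym2.congr_right.1 hab
  have h1 := Set.ncard_image_of_injective {u | s(w, u) ∈ l} hinj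
  rw [himg] at h1
  rw [← h1]
  have h2 : {e | e ∈ l ∧ w ∈ e} = ↑((l.filter (fun e => w ∈ e)).toFinset) := by
    ext e
    simp [List.mem_filter]
  rw [h2, Set.ncard_coe_finset, List.toFinset_card_of_nodup (hl.filter _),
    ← List.countP_eq_length_filter]

lemma toSubgraph_even_degree {x : V} (t : G.Walk x x) (ht : t.IsTrail) (w : V) :
    Even ((t.toSubgraph.neighborSet w).ncard) := by
  classical
  letI : DecidableEq V := Classical.decEq V
  have hset : t.toSubgraph.neighborSet w = {u | s(w, u) ∈ t.edges} := by
    ext u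
    simp only [Subgraph.mem_neighborSet, Set.mem_setOf_eq, ← Subgraph.mem_edgeSet,
      t.mem_edges_toSubgraph]
  rw [hset, ncard_nbhd _ ht.edges_nodup w]
  exact (ht.even_countP_edges_iff w).2 (by simp)

lemma color_walk {c : V → ZMod 2} {a b : V} (p : G.Walk a b)
    (h : ∀ d ∈ p.darts, c d.snd = c d.fst + 1) : c b = c a + p.length := by
  induction p with
  | nil => simp
  | @cons a a' b hadj q ih =>
    have h1 : c a' = c a + 1 := h ⟨(a, a'), hadj⟩ (by simp [Walk.darts_cons])
    have h2 := ih (fun d hd => h d (by simp [Walk.darts_cons, hd]))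
    rw [Walk.length_cons, h2, h1]
    push_cast
    ring

lemma odd_cast {n : ℕ} (h : Odd n) : (n : ZMod 2) = 1 := by
  obtain ⟨k, rfl⟩ := h
  push_cast
  have : (2 : ZMod 2) = 0 := by decide
  rw [this]
  ring


lemma exists_coloring : ∀ {a b : V} (p : G.Walk a b),
    (∀ (x : V) (q : G.Walk a x) (r : G.Walk x x) (s : G.Walk x b),
      p = q.append (r.append s) → Even r.length) →
    ∃ c : V → ZMod 2, ∀ d ∈ p.darts, c d.snd = c d.fst + 1 := by
  classical
  intro a b p
  induction p with
  | nil => exact fun _ => ⟨fun _ => 0, by simp⟩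
  | @cons a a' b h q ih =>
    intro H
    have H' : ∀ (x : V) (q1 : G.Walk a' x) (r : G.Walk x x) (s : G.Walk x b),
        q = q1.append (r.append s) → Even r.length := by
      intro x q1 r s hq
      exact H x (Walk.cons h q1) r s (by rw [hq, Walk.cons_append])
    obtain ⟨c, hc⟩ := ih H'
    by_cases ha : a ∈ q.support
    · have hodd : Odd (q.takeUntil a ha).length := by
        have heven := H a Walk.nil (Walk.cons h (q.takeUntil a ha)) (q.dropUntil a ha)
          (by rw [Walk.nil_append, Walk.cons_append, Walk.take_spec])
        rw [Walk.length_cons, Nat.even_add_one] at heven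
        exact Nat.not_even_iff_odd.mp heven
      have hca : c a = c a' + 1 := by
        have hcw := color_walk (q.takeUntil a ha)
          (fun d hd => hc d (q.darts_takeUntil_subset ha hd))
        rw [odd_cast hodd] at hcw
        exact hcw
      refine ⟨c, ?_⟩
      intro d hd
      rw [Walk.darts_cons, List.mem_cons] at hd
      rcases hd with rfl | hd
      · show c a' = c a + 1
        rw [hca, add_assoc, show (1 : ZMod 2) + 1 = 0 by decide, add_zero]
      · exact hc d hd
    · refine ⟨fun x => if x = a then c a' + 1 else c x, ?_⟩
      intro d hd
      rw [Walk.darts_cons, List.mem_cons] at hd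
      rcases hd with rfl | hd
      · show (if a' = a then _ else c a') = (if a = a then _ else c a) + 1
        rw [if_neg (fun hh : a' = a => ha (hh ▸ q.start_mem_support)), if_pos rfl,
          add_assoc, show (1 : ZMod 2) + 1 = 0 by decide, add_zero]
      · have h1 : d.fst ≠ a := fun hh => ha (hh ▸ q.dart_fst_mem_support_of_mem_darts hd)
        have h2 : d.snd ≠ a := fun hh => ha (hh ▸ q.dart_snd_mem_support_of_mem_darts hd)
        show (if d.snd = a then _ else c d.snd) = (if d.fst = a then _ else c d.fst) + 1
        rw [if_neg h1, if_neg h2]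
        exact hc d hd


lemma trail_length_le [Fintype V] {u x : V} {p : G.Walk x u} (hp : p.IsTrail) :
    p.length ≤ G.edgeSet.ncard := by
  rw [← p.length_edges]
  exact list_length_le_ncard hp.edges_nodup G.edgeSet.toFinite
    (fun e he => p.edges_subset_edgeSet he)

lemma extend_to_closed_trail [Fintype V] (heven : ∀ v, Even ((G.neighborSet v).ncard)) :
    ∀ (n : ℕ) (u x : V) (p : G.Walk x u), p.IsTrail → G.edgeSet.ncard ≤ p.length + n →
    ∃ q : G.Walk u x, (p.append q).IsTrail := by
  classical
  intro n
  induction n with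
  | zero =>
    intro u x p hp hn
    by_cases hux : u = x
    · subst hux
      exact ⟨Walk.nil, by rwa [Walk.append_nil]⟩
    · exfalso
      -- there is an unused edge at u, contradicting maximality
      have hodd : ¬ Even (p.edges.countP fun e => u ∈ e) := by
        rw [hp.even_countP_edges_iff u]
        push_neg
        exact ⟨fun hh => hux hh.symm, fun _ => rfl⟩
      have hun : ∃ w, G.Adj u w ∧ s(u, w) ∉ p.edges := by
        by_contra hno
        push_neg at hno
        apply hodd
        have hsets : G.neighborSet u = {w | s(u, w) ∈ p.edges} := by
          ext w
          exact ⟨fun hw => hno w hw, fun hw => p.edges_subset_edgeSet hw⟩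
        have h1 := heven u
        rwa [hsets, ncard_nbhd p.edges hp.edges_nodup u] at h1
      obtain ⟨w, hw, hwp⟩ := hun
      have htr : (p.concat hw).IsTrail := by
        rw [Walk.isTrail_def, Walk.edges_concat, List.concat_eq_append, List.nodup_append]
        exact ⟨hp.edges_nodup, List.nodup_singleton _, by simpa using fun a (ha : a ∈ p.edges) (hab : a = s(u, w)) => hwp (hab ▸ ha)⟩
      have := trail_length_le htr
      rw [Walk.length_concat] at this
      omega
  | succ m ih =>
    intro u x p hp hn
    by_cases hux : u = x
    · subst hux
      exact ⟨Walk.nil, by rwa [Walk.append_nil]⟩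
    · have hodd : ¬ Even (p.edges.countP fun e => u ∈ e) := by
        rw [hp.even_countP_edges_iff u]
        push_neg
        exact ⟨fun hh => hux hh.symm, fun _ => rfl⟩
      have hun : ∃ w, G.Adj u w ∧ s(u, w) ∉ p.edges := by
        by_contra hno
        push_neg at hno
        apply hodd
        have hsets : G.neighborSet u = {w | s(u, w) ∈ p.edges} := by
          ext w
          exact ⟨fun hw => hno w hw, fun hw => p.edges_subset_edgeSet hw⟩
        have h1 := heven u
        rwa [hsets, ncard_nbhd p.edges hp.edges_nodup u] at h1
      obtain ⟨w, hw, hwp⟩ := hun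
      have htr : (p.concat hw).IsTrail := by
        rw [Walk.isTrail_def, Walk.edges_concat, List.concat_eq_append, List.nodup_append]
        exact ⟨hp.edges_nodup, List.nodup_singleton _, by simpa using fun a (ha : a ∈ p.edges) (hab : a = s(u, w)) => hwp (hab ▸ ha)⟩
      obtain ⟨q', hq'⟩ := ih w x (p.concat hw) htr
        (by rw [Walk.length_concat]; omega)
      refine ⟨Walk.cons hw q', ?_⟩
      have heq : p.append (Walk.cons hw q') = (p.concat hw).append q' := by
        rw [Walk.concat_eq_append, ← Walk.append_assoc, Walk.cons_append, Walk.nil_append]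
      rwa [heq]


lemma find_attach {E : Set (Sym2 V)} {S : Set V}
    (hcl : ∀ e ∈ E, ∀ a : V, a ∈ e → a ∈ S) :
    ∀ {z t : V}, G.Walk z t → t ∈ S → (∃ y, G.Adj z y ∧ s(z, y) ∉ E) →
      ∃ x ∈ S, ∃ y, G.Adj x y ∧ s(x, y) ∉ E := by
  intro z t W
  induction W with
  | nil => exact fun ht hz => ⟨_, ht, hz⟩
  | @cons z z' t h W ih =>
    intro ht hz
    by_cases hzS : z ∈ S
    · exact ⟨z, hzS, hz⟩
    · refine ih ht ⟨z, h.symm, ?_⟩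
      intro hmem
      exact hzS (hcl _ hmem z (Sym2.mem_mk_right z' z))

lemma euler_exists [Fintype V] (hconn : G.Connected)
    (heven : ∀ v, Even ((G.neighborSet v).ncard)) {a b : V} (hab : G.Adj a b) :
    ∃ (v : V) (c : G.Walk v v), c.IsTrail ∧ ∀ e ∈ G.edgeSet, e ∈ c.edges := by
  classical
  suffices h : ∀ (n : ℕ) (v : V) (c : G.Walk v v), c.IsTrail →
      G.edgeSet.ncard ≤ c.length + n →
      ∃ (w : V) (c' : G.Walk w w), c'.IsTrail ∧ ∀ e ∈ G.edgeSet, e ∈ c'.edges by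
    have htr1 : (Walk.cons hab Walk.nil).IsTrail := by
      rw [Walk.isTrail_def]
      simp
    obtain ⟨q, hq⟩ := extend_to_closed_trail heven G.edgeSet.ncard b a
      (Walk.cons hab Walk.nil) htr1 (by simp)
    exact h G.edgeSet.ncard a _ hq (by omega)
  intro n
  induction n with
  | zero =>
    intro v c hc hn
    refine ⟨v, c, hc, fun e he => ?_⟩
    by_contra hne
    have := list_length_lt_ncard hc.edges_nodup G.edgeSet.toFinite
      (fun e' he' => c.edges_subset_edgeSet he') he hne
    rw [c.length_edges] at this
    omega
  | succ m ih =>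
    intro v c hc hn
    by_cases hcov : ∀ e ∈ G.edgeSet, e ∈ c.edges
    · exact ⟨v, c, hc, hcov⟩
    · push_neg at hcov
      obtain ⟨e0, he0, he0'⟩ := hcov
      -- pick an endpoint of e0
      induction e0 using Sym2.ind with
      | _ z1 z2 =>
      have hz12 : G.Adj z1 z2 := he0
      -- find a support vertex with an unused edge
      have hcl : ∀ e ∈ {e : Sym2 V | e ∈ c.edges}, ∀ a : V, a ∈ e → a ∈ {w | w ∈ c.support} := by
        intro e he a ha
        obtain ⟨y', rfl⟩ := Sym2.mem_iff_exists.1 ha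
        exact c.fst_mem_support_of_mem_edges he
      obtain ⟨x, hxS, y, hxy, hnot⟩ := (hconn z1 v).elim
        (fun W => find_attach hcl W c.start_mem_support ⟨z2, hz12, he0'⟩)
      -- rotate c to x and extend with the unused edge
      have hc1 : (c.rotate x hxS).IsTrail := hc.rotate hxS
      have hxyc1 : s(x, y) ∉ (c.rotate x hxS).edges := by
        intro hmem
        exact hnot ((c.rotate_edges x hxS).perm.mem_iff.1 hmem)
      have hlenrot : (c.rotate x hxS).length = c.length := by
        rw [← Walk.length_edges, ← Walk.length_edges, (c.rotate_edges x hxS).perm.length_eq]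
      have htr2 : ((c.rotate x hxS).concat hxy).IsTrail := by
        rw [Walk.isTrail_def, Walk.edges_concat, List.concat_eq_append, List.nodup_append]
        exact ⟨hc1.edges_nodup, List.nodup_singleton _, by simpa using fun a (ha : a ∈ (c.rotate x hxS).edges) (hab : a = s(x, y)) => hxyc1 (hab ▸ ha)⟩
      obtain ⟨q, hq⟩ := extend_to_closed_trail heven m y x ((c.rotate x hxS).concat hxy) htr2
        (by rw [Walk.length_concat, hlenrot]; omega)
      apply ih x (((c.rotate x hxS).concat hxy).append q) hq
      rw [Walk.length_append, Walk.length_concat, hlenrot]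
      omega


lemma length_rotate' [DecidableEq V] {u v : V} (c : G.Walk v v) (h : u ∈ c.support) :
    (c.rotate u h).length = c.length := by
  rw [← Walk.length_edges, ← Walk.length_edges, (c.rotate_edges u h).perm.length_eq]

lemma closed_path_nil {u : V} (r : G.Walk u u) (hr : r.support.Nodup) : r.length = 0 := by
  cases r with
  | nil => rfl
  | cons h t =>
    exfalso
    rw [Walk.support_cons, List.nodup_cons] at hr
    exact hr.1 t.end_mem_support

lemma edge_end_start {b u : V} : ∀ (t : G.Walk b u), t.IsPath → s(u, b) ∈ t.edges →
    t.length = 1 := by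
  intro t
  induction t with
  | nil => simp
  | @cons b b2 u h' r ih =>
    intro hp he
    rw [Walk.edges_cons, List.mem_cons] at he
    rcases he with he | he
    · rw [Sym2.eq_iff] at he
      rcases he with ⟨rfl, rfl⟩ | ⟨rfl, -⟩
      · exact absurd h' (G.loopless.irrefl _)
      · have h0 := closed_path_nil r ((Walk.cons_isPath_iff h' r).1 hp).1.2
        rw [Walk.length_cons, h0]
    · exfalso
      have hb : b ∈ r.support := r.fst_mem_support_of_mem_edges (by rwa [Sym2.eq_swap] at he)
      exact ((Walk.cons_isPath_iff h' r).1 hp).2 hb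

lemma odd_cycle_of_odd_closed :
    ∀ (n : ℕ) (u : V) (w : G.Walk u u), w.length ≤ n → Odd w.length →
    ∃ (x : V) (c : G.Walk x x), c.IsCycle ∧ Odd c.length := by
  classical
  intro n
  induction n with
  | zero =>
    intro u w hl ho
    interval_cases h : w.length
    · simp [Nat.odd_iff] at ho
  | succ m ih =>
    intro u w hl ho
    have hnn : ¬ w.Nil := by
      rw [Walk.nil_iff_length_eq]
      intro h0
      rw [h0] at ho
      simp [Nat.odd_iff] at ho
    by_cases hnd : w.support.tail.Nodup
    · -- w is itself a cycle
      refine ⟨u, w, ?_, ho⟩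
      rw [← w.cons_tail_eq hnn, Walk.cons_isCycle_iff]
      have hpath : w.tail.IsPath := Walk.IsPath.mk' (by rw [w.support_tail_of_not_nil hnn]; exact hnd)
      refine ⟨hpath, fun hmem => ?_⟩
      have h1 := edge_end_start w.tail hpath hmem
      have h2 := w.length_tail_add_one hnn
      rw [h1] at h2
      rw [← h2] at ho
      simp [Nat.odd_iff] at ho
    · -- split at a repeated vertex
      obtain ⟨y, hy⟩ := List.exists_duplicate_iff_not_nodup.2 hnd
      have hys : y ∈ w.support := w.support.mem_of_mem_tail hy.mem
      set w' := w.rotate y hys with hw'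
      have hnn' : ¬ w'.Nil := by
        rw [Walk.nil_iff_length_eq, length_rotate' w hys]
        intro h0
        rw [h0] at ho
        simp [Nat.odd_iff] at ho
      have hcnt : 2 ≤ w'.support.tail.count y := by
        rw [((w.support_rotate y hys).perm.count_eq y)]
        exact List.duplicate_iff_two_le_count.1 hy
      -- peel the first dart of w'
      have hyt : y ∈ w'.tail.support := w'.tail.end_mem_support
      set t1 := w'.tail.takeUntil y hyt with ht1
      set t2 := w'.tail.dropUntil y hyt with ht2
      have hspec : t1.append t2 = w'.tail := w'.tail.take_spec hyt
      have hcnt1 : t1.support.count y = 1 := w'.tail.count_support_takeUntil_eq_one hyt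
      have hlen2 : 1 ≤ t2.length := by
        by_contra hlen
        have h0 : t2.length = 0 := by omega
        have hsup : w'.tail.support = t1.support ++ t2.support.tail := by
          rw [← hspec, Walk.support_append]
        have hcnt2 : t2.support.tail.length = 0 := by
          have := t2.length_support
          have := List.length_tail (l := t2.support)
          omega
        rw [List.length_eq_zero_iff] at hcnt2
        rw [← w'.support_tail_of_not_nil hnn'] at hcnt
        rw [hsup, hcnt2, List.append_nil, hcnt1] at hcnt
        omega
      have hsum : (Walk.cons (Walk.adj_snd hnn') t1).length + t2.length = w'.length := by
        rw [Walk.length_cons, ← w'.length_tail_add_one hnn', ← hspec, Walk.length_append]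
        omega
      have hwlen : w'.length = w.length := length_rotate' w hys
      have hl1 : 1 ≤ (Walk.cons (Walk.adj_snd hnn') t1).length := by
        rw [Walk.length_cons]
        omega
      have ho' : w'.length % 2 = 1 := by
        rw [hwlen]
        exact Nat.odd_iff.mp ho
      rcases Nat.even_or_odd (Walk.cons (Walk.adj_snd hnn') t1).length with he1 | ho1
      · have hot2 : Odd t2.length := by
          rw [Nat.odd_iff]
          rw [Nat.even_iff] at he1
          omega
        exact ih y t2 (by omega) hot2
      · exact ih y (Walk.cons (Walk.adj_snd hnn') t1) (by omega) ho1


end OddAux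

/-- An eulerian subgraph of `G`: a connected (hence vertex-nonempty) subgraph of `G`
in which every vertex has even degree. -/
def IsEulerianSubgraph {V : Type*} (G : SimpleGraph V) (H : G.Subgraph) : Prop :=
  H.Connected ∧ ∀ v ∈ H.verts, Even ((H.neighborSet v).ncard)

/-- A `k`-odd decomposition of `G`: a partition of the edge set of `G` into the edge
sets of `k` eulerian subgraphs, each having an odd number of edges. -/
def IsKOddDecomposition {V : Type*} (G : SimpleGraph V) (k : ℕ)
    (D : Fin k → G.Subgraph) : Prop :=
  (∀ i, IsEulerianSubgraph G (D i)) ∧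
  (∀ i, Odd ((D i).edgeSet.ncard)) ∧
  (∀ i j, i ≠ j → Disjoint ((D i).edgeSet) ((D j).edgeSet)) ∧
  (⋃ i, (D i).edgeSet) = G.edgeSet

/-- A rooted `k`-odd decomposition: a `k`-odd decomposition all of whose constituents
share a common vertex. -/
def IsRootedKOddDecomposition {V : Type*} (G : SimpleGraph V) (k : ℕ)
    (D : Fin k → G.Subgraph) : Prop :=
  IsKOddDecomposition G k D ∧ ∃ v : V, ∀ i, v ∈ (D i).verts

open OddAux in
/-- An eulerian graph has a rooted 2-odd decomposition iff it is non-bipartite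
(contains an odd cycle) and has an even number of edges. -/
theorem rooted2OddDecomposition_iff {V : Type*} [Fintype V] (G : SimpleGraph V)
    (hconn : G.Connected) (heven : ∀ v : V, Even ((G.neighborSet v).ncard)) :
    (∃ D : Fin 2 → G.Subgraph, IsRootedKOddDecomposition G 2 D) ↔
      ((∃ (u : V) (c : G.Walk u u), c.IsCycle ∧ Odd c.length) ∧
        Even G.edgeSet.ncard) := by
  classical
  constructor
  · rintro ⟨D, ⟨⟨heul, hoddE, hdisj, huni⟩, v0, hv0⟩⟩
    constructor
    · -- non-bipartite: extract an odd closed walk from `D 0`, then an odd cycle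
      set H := D 0 with hH
      haveI : Fintype ↑H.verts := (H.verts.toFinite).fintype
      have hHconn : H.coe.Connected := (heul 0).1.coe
      have hHeven : ∀ w : ↑H.verts, Even ((H.coe.neighborSet w).ncard) := by
        intro w
        have himg : Subtype.val '' (H.coe.neighborSet w) = H.neighborSet ↑w := by
          ext u
          constructor
          · rintro ⟨⟨u', hu'⟩, hadj, rfl⟩
            exact hadj
          · intro hu
            exact ⟨⟨u, H.edge_vert (H.adj_symm hu)⟩, hu, rfl⟩
        have h2 := (heul 0).2 ↑w w.2
        rw [← hH] at h2
        rw [← himg, Set.ncard_image_of_injective _ Subtype.val_injective] at h2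
        exact h2
      have hne : H.edgeSet.Nonempty := by
        apply Set.nonempty_of_ncard_ne_zero
        intro h0
        have := hoddE 0
        rw [← hH, h0] at this
        simp [Nat.odd_iff] at this
      obtain ⟨e, he⟩ := hne
      induction e using Sym2.ind with
      | _ a b =>
      have hadjH : H.Adj a b := (Subgraph.mem_edgeSet).1 he
      have hadjcoe : H.coe.Adj ⟨a, H.edge_vert hadjH⟩ ⟨b, H.edge_vert hadjH.symm⟩ := hadjH
      obtain ⟨x, c, hctrail, hccov⟩ := euler_exists hHconn hHeven hadjcoe
      have hlenc : c.length = H.coe.edgeSet.ncard := by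
        rw [← c.length_edges]
        exact list_length_eq_ncard hctrail.edges_nodup H.coe.edgeSet.toFinite
          (fun e' he' => c.edges_subset_edgeSet he') hccov
      have hcard : H.coe.edgeSet.ncard = H.edgeSet.ncard := by
        have himg : Sym2.map (Subtype.val) '' H.coe.edgeSet = H.edgeSet := by
          ext e'
          constructor
          · rintro ⟨e'', he'', rfl⟩
            revert he''
            induction e'' using Sym2.ind with
            | _ a' b' =>
              intro he''
              exact (Subgraph.mem_edgeSet).2 he''
          · intro he'
            revert he'
            induction e' using Sym2.ind with
            | _ a' b' =>
              intro he'
              have hadj' : H.Adj a' b' := (Subgraph.mem_edgeSet).1 he'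
              exact ⟨s(⟨a', H.edge_vert hadj'⟩, ⟨b', H.edge_vert hadj'.symm⟩), hadj', rfl⟩
        rw [← himg, Set.ncard_image_of_injective _ (Sym2.map.injective Subtype.val_injective)]
      have hoddlen : Odd ((c.map H.hom).length) := by
        rw [Walk.length_map, hlenc, hcard]
        have := hoddE 0
        rwa [← hH] at this
      exact odd_cycle_of_odd_closed ((c.map H.hom).length) ↑x (c.map H.hom) le_rfl hoddlen
    · -- even number of edges
      have h01 : G.edgeSet = (D 0).edgeSet ∪ (D 1).edgeSet := by
        rw [← huni]
        ext e
        simp [Set.mem_iUnion, Fin.exists_fin_two]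
      rw [h01, Set.ncard_union_eq (hdisj 0 1 (by decide)) (D 0).edgeSet.toFinite
        (D 1).edgeSet.toFinite]
      obtain ⟨k1, hk1⟩ := hoddE 0
      obtain ⟨k2, hk2⟩ := hoddE 1
      exact ⟨k1 + k2 + 1, by omega⟩
  · rintro ⟨⟨u0, cyc, hcyc, hocyc⟩, hEeven⟩
    have hnnc : ¬ cyc.Nil := by
      rw [Walk.nil_iff_length_eq]
      intro h0
      rw [h0] at hocyc
      simp [Nat.odd_iff] at hocyc
    obtain ⟨v, p, hptrail, hpcov⟩ := euler_exists hconn heven (Walk.adj_snd hnnc)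
    have hplen : p.length = G.edgeSet.ncard := by
      rw [← p.length_edges]
      exact list_length_eq_ncard hptrail.edges_nodup G.edgeSet.toFinite
        (fun e he => p.edges_subset_edgeSet he) hpcov
    by_cases hsplit : ∃ (x : V) (q : G.Walk v x) (r : G.Walk x x) (s : G.Walk x v),
        p = q.append (r.append s) ∧ Odd r.length
    · obtain ⟨x, q, r, s, heq, hro⟩ := hsplit
      have hpe : p.edges = q.edges ++ (r.edges ++ s.edges) := by
        rw [heq, Walk.edges_append, Walk.edges_append]
      have hnd := hptrail.edges_nodup
      rw [hpe, List.nodup_append, List.nodup_append] at hnd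
      obtain ⟨hqnd, ⟨hrnd, hsnd, hRS⟩, hQRS⟩ := hnd
      have hrtrail : r.IsTrail := (Walk.isTrail_def r).2 hrnd
      have ht2 : (q.append s).IsTrail := by
        rw [Walk.isTrail_def, Walk.edges_append, List.nodup_append]
        exact ⟨hqnd, hsnd, fun a ha b hb => hQRS a ha b (List.mem_append_right _ hb)⟩
      have hlens : Odd (q.append s).length := by
        have h1 : p.length = q.length + (r.length + s.length) := by
          rw [heq, Walk.length_append, Walk.length_append]
        have h2 : Even p.length := by rwa [hplen]
        rw [Walk.length_append]
        rw [Nat.odd_iff] at hro ⊢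
        rw [Nat.even_iff] at h2
        omega
      refine ⟨![r.toSubgraph, (q.append s).toSubgraph], ⟨⟨?_, ?_, ?_, ?_⟩, x, ?_⟩⟩
      · intro i
        fin_cases i
        · exact ⟨r.toSubgraph_connected, fun w _ => toSubgraph_even_degree r hrtrail w⟩
        · exact ⟨(q.append s).toSubgraph_connected,
            fun w _ => toSubgraph_even_degree (q.append s) ht2 w⟩
      · intro i
        fin_cases i
        · show Odd (r.toSubgraph.edgeSet.ncard)
          rw [Walk.edgeSet_toSubgraph, Walk.edgeSet, ncard_mem_list hrnd, Walk.length_edges]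
          exact hro
        · show Odd ((q.append s).toSubgraph.edgeSet.ncard)
          rw [Walk.edgeSet_toSubgraph, Walk.edgeSet, ncard_mem_list ht2.edges_nodup, Walk.length_edges]
          exact hlens
      · intro i j hij
        fin_cases i <;> fin_cases j
        · exact absurd rfl hij
        · show Disjoint (r.toSubgraph.edgeSet) ((q.append s).toSubgraph.edgeSet)
          rw [Set.disjoint_left]
          intro e he1 he2
          rw [Walk.edgeSet_toSubgraph, Walk.mem_edgeSet] at he1
          rw [Walk.edgeSet_toSubgraph, Walk.mem_edgeSet, Walk.edges_append,
            List.mem_append] at he2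
          rcases he2 with he2 | he2
          · exact hQRS e he2 e (List.mem_append_left _ he1) rfl
          · exact hRS e he1 e he2 rfl
        · show Disjoint ((q.append s).toSubgraph.edgeSet) (r.toSubgraph.edgeSet)
          rw [Set.disjoint_left]
          intro e he1 he2
          rw [Walk.edgeSet_toSubgraph, Walk.mem_edgeSet, Walk.edges_append,
            List.mem_append] at he1
          rw [Walk.edgeSet_toSubgraph, Walk.mem_edgeSet] at he2
          rcases he1 with he1 | he1
          · exact hQRS e he1 e (List.mem_append_left _ he2) rfl
          · exact hRS e he2 e he1 rfl
        · exact absurd rfl hij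
      · ext e
        rw [Set.mem_iUnion, Fin.exists_fin_two]
        simp only [Matrix.cons_val_zero, Matrix.cons_val_one, Matrix.head_cons,
          Walk.edgeSet_toSubgraph, Walk.mem_edgeSet]
        constructor
        · rintro (h1 | h2)
          · exact r.edges_subset_edgeSet h1
          · exact (q.append s).edges_subset_edgeSet h2
        · intro he
          have hep : e ∈ p.edges := hpcov e he
          rw [hpe, List.mem_append, List.mem_append] at hep
          rcases hep with hq' | hr' | hs'
          · right
            rw [Walk.edges_append, List.mem_append]
            exact Or.inl hq'
          · left
            exact hr'
          · right
            rw [Walk.edges_append, List.mem_append]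
            exact Or.inr hs'
      · intro i
        fin_cases i
        · exact r.start_mem_verts_toSubgraph
        · show x ∈ (q.append s).toSubgraph.verts
          rw [Walk.mem_verts_toSubgraph, Walk.mem_support_append_iff]
          exact Or.inl q.end_mem_support
    · push_neg at hsplit
      exfalso
      have hallEven : ∀ (x : V) (q : G.Walk v x) (r : G.Walk x x) (s : G.Walk x v),
          p = q.append (r.append s) → Even r.length := by
        intro x q r s h
        exact Nat.not_odd_iff_even.1 (hsplit x q r s h)
      obtain ⟨c, hc⟩ := exists_coloring p hallEven
      have hproper : ∀ a b : V, G.Adj a b → c b = c a + 1 := by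
        intro a b hadj
        have he : s(a, b) ∈ p.edges := hpcov _ ((G.mem_edgeSet).2 hadj)
        rw [Walk.edges, List.mem_map] at he
        obtain ⟨d, hd, hde⟩ := he
        have hde' : s(d.toProd.1, d.toProd.2) = s(a, b) := by
          rw [← hde]; rfl
        rw [Sym2.eq_iff] at hde'
        rcases hde' with ⟨h1, h2⟩ | ⟨h1, h2⟩
        · rw [← h1, ← h2]; exact hc d hd
        · have h3 := hc d hd
          rw [h1, h2] at h3
          rw [h3, add_assoc, show (1 : ZMod 2) + 1 = 0 by decide, add_zero]
      have hcyccol := color_walk cyc (fun d hd => hproper _ _ d.adj)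
      rw [odd_cast hocyc] at hcyccol
      have : (1 : ZMod 2) = 0 := left_eq_add.1 hcyccol
      exact absurd this (by decide)
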